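/- Let X ⊆ ℝ^N be path-connected, and suppose there exist constants M > 0 and β ∈ (0,1] such that d_{X,diam}(u,v) ≤ M‖u−v‖^β for all u,v ∈ X. Suppose also d_{X,inn} ≤ K·d_{X,diam} for some K > 0. If γ₁, γ₂ : (0,ε) → X are arcs such that d_{X,inn}(γ₁(t), γ₂(t)) ≥ c·t for some c > 0 and all small t, and ‖γ₁(t) − γ₂(t)‖ ≤ C·t^b for some b with β·b > 1, then a contradiction follows; i.e., no such pair of arcs exists. -/

import Mathlib

open Set Metric ENNReal Filter Topology

/-- The inner (length) distance on a subset `X` of a normed space. -/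
noncomputable def innerDist {E : Type*} [NormedAddCommGroup E] (X : Set E) (x y : E) : ℝ≥0∞ :=
  ⨅ γ ∈ {γ : ℝ → E | ContinuousOn γ (Set.Icc 0 1) ∧ γ 0 = x ∧ γ 1 = y ∧
      ∀ t ∈ Set.Icc (0:ℝ) 1, γ t ∈ X}, eVariationOn γ (Set.Icc 0 1)

/-- The diameter distance on a subset `X` of a normed space. -/
noncomputable def diamDist {E : Type*} [NormedAddCommGroup E] (X : Set E) (x y : E) : ℝ≥0∞ :=
  ⨅ γ ∈ {γ : ℝ → E | ContinuousOn γ (Set.Icc 0 1) ∧ γ 0 = x ∧ γ 1 = y ∧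
      ∀ t ∈ Set.Icc (0:ℝ) 1, γ t ∈ X}, EMetric.diam (γ '' Set.Icc (0:ℝ) 1)

/-- Order-comparison contradiction: if `d_{X,diam}(u,v) ≤ M‖u−v‖^β`, `d_{X,inn} ≤ K·d_{X,diam}`,
and arcs `γ₁, γ₂ : (0,ε) → X` satisfy `c·t ≤ d_{X,inn}(γ₁ t, γ₂ t)` and
`‖γ₁ t − γ₂ t‖ ≤ C·t^b` with `β·b > 1`, then `False`. -/
theorem stmt_10 {N : ℕ} (X : Set (EuclideanSpace ℝ (Fin N))) (hX : IsPathConnected X)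
    (M β : ℝ) (hM : 0 < M) (hβ0 : 0 < β) (hβ1 : β ≤ 1)
    (hdiam : ∀ u ∈ X, ∀ v ∈ X, diamDist X u v ≤ ENNReal.ofReal (M * ‖u - v‖ ^ β))
    (K : ℝ) (hK : 0 < K)
    (hinn : ∀ u ∈ X, ∀ v ∈ X, innerDist X u v ≤ ENNReal.ofReal K * diamDist X u v)
    (ε : ℝ) (hε : 0 < ε) (γ₁ γ₂ : ℝ → EuclideanSpace ℝ (Fin N))
    (hγ₁ : ∀ t ∈ Set.Ioo (0:ℝ) ε, γ₁ t ∈ X) (hγ₂ : ∀ t ∈ Set.Ioo (0:ℝ) ε, γ₂ t ∈ X)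
    (c : ℝ) (hc : 0 < c)
    (hlow : ∀ t ∈ Set.Ioo (0:ℝ) ε, ENNReal.ofReal (c * t) ≤ innerDist X (γ₁ t) (γ₂ t))
    (C b : ℝ) (hC : 0 < C) (hβb : 1 < β * b)
    (hupper : ∀ t ∈ Set.Ioo (0:ℝ) ε, ‖γ₁ t - γ₂ t‖ ≤ C * t ^ b) :
    False := by
  -- Setup constants
  set D := K * M * C ^ β with hD
  have hD0 : 0 < D := by positivity
  have he : 0 < β * b - 1 := by linarith
  set t := min (ε / 2) ((c / (2 * D)) ^ (β * b - 1)⁻¹) with ht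
  have hq0 : 0 < (c / (2 * D)) ^ (β * b - 1)⁻¹ :=
    Real.rpow_pos_of_pos (by positivity) _
  have ht0 : 0 < t := lt_min (by linarith) hq0
  have htε : t < ε := lt_of_le_of_lt (min_le_left _ _) (by linarith)
  have htI : t ∈ Set.Ioo (0:ℝ) ε := ⟨ht0, htε⟩
  have hu := hγ₁ t htI
  have hv := hγ₂ t htI
  -- chain of inequalities in ℝ≥0∞
  have h1 : ENNReal.ofReal (c * t) ≤ ENNReal.ofReal (K * (M * ‖γ₁ t - γ₂ t‖ ^ β)) := by
    calc ENNReal.ofReal (c * t) ≤ innerDist X (γ₁ t) (γ₂ t) := hlow t htI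
      _ ≤ ENNReal.ofReal K * diamDist X (γ₁ t) (γ₂ t) := hinn _ hu _ hv
      _ ≤ ENNReal.ofReal K * ENNReal.ofReal (M * ‖γ₁ t - γ₂ t‖ ^ β) := by
          exact mul_le_mul_right (hdiam _ hu _ hv) _
      _ = ENNReal.ofReal (K * (M * ‖γ₁ t - γ₂ t‖ ^ β)) := by
          rw [← ENNReal.ofReal_mul hK.le]
  have hreal : c * t ≤ K * (M * ‖γ₁ t - γ₂ t‖ ^ β) := by
    have hnn : 0 ≤ K * (M * ‖γ₁ t - γ₂ t‖ ^ β) := by positivity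
    exact (ENNReal.ofReal_le_ofReal_iff hnn).mp h1
  -- bound the norm term
  have hnb : ‖γ₁ t - γ₂ t‖ ^ β ≤ (C * t ^ b) ^ β :=
    Real.rpow_le_rpow (norm_nonneg _) (hupper t htI) hβ0.le
  have hexp : (C * t ^ b) ^ β = C ^ β * t ^ (β * b) := by
    rw [Real.mul_rpow hC.le (Real.rpow_nonneg ht0.le _), ← Real.rpow_mul ht0.le,
      mul_comm b β]
  have hmain : c * t ≤ D * t ^ (β * b) := by
    calc c * t ≤ K * (M * ‖γ₁ t - γ₂ t‖ ^ β) := hreal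
      _ ≤ K * (M * (C ^ β * t ^ (β * b))) := by
          rw [← hexp]
          nlinarith [mul_le_mul_of_nonneg_left hnb (by positivity : (0:ℝ) ≤ K * M)]
      _ = D * t ^ (β * b) := by rw [hD]; ring
  have hsplit : t ^ (β * b) = t * t ^ (β * b - 1) := by
    nth_rewrite 1 [show β * b = 1 + (β * b - 1) by ring]
    rw [Real.rpow_add ht0, Real.rpow_one]
  have hc2 : c ≤ D * t ^ (β * b - 1) := by
    rw [hsplit] at hmain
    have := mul_le_mul_iff_of_pos_right ht0 |>.mp (by linarith [hmain] : c * t ≤ (D * t ^ (β * b - 1)) * t)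
    exact this
  have htle : t ^ (β * b - 1) ≤ c / (2 * D) := by
    have h1 : t ≤ (c / (2 * D)) ^ (β * b - 1)⁻¹ := min_le_right _ _
    calc t ^ (β * b - 1) ≤ ((c / (2 * D)) ^ (β * b - 1)⁻¹) ^ (β * b - 1) :=
          Real.rpow_le_rpow ht0.le h1 he.le
      _ = c / (2 * D) := by
          rw [← Real.rpow_mul (by positivity), inv_mul_cancel₀ he.ne', Real.rpow_one]
  have : c ≤ c / 2 := by
    calc c ≤ D * t ^ (β * b - 1) := hc2
      _ ≤ D * (c / (2 * D)) := by nlinarith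
      _ = c / 2 := by field_simp
  linarith
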